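/- Let X and Y be finite simple graphs with Y having n vertices, and suppose Y has no edges (Y = X_n). Then S_Y ≠ ∅ iff n ≥ 2 and T_Y = ∅ whenever n ≥ 2, so Sabidussi's condition for X ∘ X_n (the disjoint union of n copies of X, denoted nX) reduces to: Aut(nX) = Aut(X) ≀ S_n if and only if X is connected or n = 1. -/

import Mathlib

/-- The lexicographic product `X ∘ Y`: vertex set `X × Y`, with
`(i,α) ~ (j,β)` iff (`α = β` and `i ~_X j`) or `α ~_Y β`. -/
def lexProd {α β : Type*} (X : SimpleGraph α) (Y : SimpleGraph β) :
    SimpleGraph (α × β) where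
  Adj p q := (p.2 = q.2 ∧ X.Adj p.1 q.1) ∨ Y.Adj p.2 q.2
  symm := by
    constructor
    rintro ⟨i, a⟩ ⟨j, b⟩ (⟨h1, h2⟩ | h)
    · exact Or.inl ⟨h1.symm, h2.symm⟩
    · exact Or.inr h.symm
  loopless := by
    constructor
    rintro ⟨i, a⟩ (⟨-, h⟩ | h)
    · exact X.loopless.irrefl i h
    · exact Y.loopless.irrefl a h

/-- A permutation of the vertices is a graph automorphism if it preserves adjacency. -/
def IsGraphAut {α : Type*} (X : SimpleGraph α) (σ : Equiv.Perm α) : Prop :=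
  ∀ i j, X.Adj (σ i) (σ j) ↔ X.Adj i j

/-- The permutation `(i,a) ↦ (σ_a i, τ a)` of `α × β`. -/
def wreathMap {α β : Type*} (σ : β → Equiv.Perm α) (τ : Equiv.Perm β) :
    Equiv.Perm (α × β) where
  toFun p := (σ p.2 p.1, τ p.2)
  invFun q := ((σ (τ.symm q.2)).symm q.1, τ.symm q.2)
  left_inv := by rintro ⟨i, a⟩; simp
  right_inv := by rintro ⟨j, b⟩; simp


lemma lex_bot_adj {α β : Type*} (X : SimpleGraph α) (p q : α × β) :
    (lexProd X (⊥ : SimpleGraph β)).Adj p q ↔ (p.2 = q.2 ∧ X.Adj p.1 q.1) := by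
  simp [lexProd]

lemma lex_bot_reach_snd {α β : Type*} {X : SimpleGraph α} {p q : α × β}
    (h : (lexProd X (⊥ : SimpleGraph β)).Reachable p q) : p.2 = q.2 := by
  rw [SimpleGraph.reachable_iff_reflTransGen] at h
  induction h with
  | refl => rfl
  | tail _ hadj ih => exact ih.trans ((lex_bot_adj _ _ _).mp hadj).1

lemma lex_bot_reach {α β : Type*} {X : SimpleGraph α} (hX : X.Connected)
    (x y : α) (a : β) :
    (lexProd X (⊥ : SimpleGraph β)).Reachable (x, a) (y, a) := by
  have h := hX.preconnected x y
  rw [SimpleGraph.reachable_iff_reflTransGen] at h ⊢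
  exact Relation.ReflTransGen.lift (fun v => (v, a)) (fun _ _ h => Or.inl ⟨rfl, h⟩) _ _ h

lemma aut_reach {α : Type*} {X : SimpleGraph α} {f : Equiv.Perm α}
    (hf : IsGraphAut X f) {p q : α} (h : X.Reachable p q) : X.Reachable (f p) (f q) := by
  rw [SimpleGraph.reachable_iff_reflTransGen] at h ⊢
  exact Relation.ReflTransGen.lift f (fun i j h => (hf i j).mpr h) _ _ h

open Classical in
noncomputable def compSwap {α : Type*} {n : ℕ} (X : SimpleGraph α) (u : α) (c0 c1 : Fin n) :
    Equiv.Perm (α × Fin n) where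
  toFun p := (p.1, if X.Reachable u p.1 then Equiv.swap c0 c1 p.2 else p.2)
  invFun p := (p.1, if X.Reachable u p.1 then Equiv.swap c0 c1 p.2 else p.2)
  left_inv := by rintro ⟨x, a⟩; by_cases h : X.Reachable u x <;> simp [h]
  right_inv := by rintro ⟨x, a⟩; by_cases h : X.Reachable u x <;> simp [h]

open Classical in
lemma compSwap_apply {α : Type*} {n : ℕ} (X : SimpleGraph α) (u : α) (c0 c1 : Fin n)
    (p : α × Fin n) :
    compSwap X u c0 c1 p = (p.1, if X.Reachable u p.1 then Equiv.swap c0 c1 p.2 else p.2) :=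
  rfl

/-- For the edgeless graph `X_n = ⊥` on `n ≥ 1` vertices:
`S_{X_n} ≠ ∅` iff `n ≥ 2`; `T_{X_n} = ∅` whenever `n ≥ 2`; and Sabidussi's condition
for `X ∘ X_n ≅ nX` reduces to: `Aut(nX) = Aut(X) ≀ S_n` if and only if `X` is
connected or `n = 1` (for `X` with at least one vertex). -/
theorem sabidussi_edgeless {α : Type*} [Fintype α] [Nonempty α]
    (X : SimpleGraph α) (n : ℕ) (hn : 0 < n) :
    ((∃ y₀ y₁ : Fin n, y₀ ≠ y₁ ∧
        (⊥ : SimpleGraph (Fin n)).neighborSet y₀ =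
          (⊥ : SimpleGraph (Fin n)).neighborSet y₁) ↔ 2 ≤ n) ∧
    (2 ≤ n → ¬ ∃ y₀ y₁ : Fin n, y₀ ≠ y₁ ∧
        (⊥ : SimpleGraph (Fin n)).neighborSet y₀ ∪ {y₀} =
          (⊥ : SimpleGraph (Fin n)).neighborSet y₁ ∪ {y₁}) ∧
    ((∀ f : Equiv.Perm (α × Fin n),
        IsGraphAut (lexProd X (⊥ : SimpleGraph (Fin n))) f →
          ∃ (σ : Fin n → Equiv.Perm α) (τ : Equiv.Perm (Fin n)),
            (∀ a, IsGraphAut X (σ a)) ∧ f = wreathMap σ τ) ↔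
      (X.Connected ∨ n = 1)) := by
  classical
  refine ⟨?_, ?_, ?_⟩
  · constructor
    · rintro ⟨y₀, y₁, hne, -⟩
      by_contra h
      push_neg at h
      interval_cases n
      exact hne (Subsingleton.elim _ _)
    · intro h2
      refine ⟨⟨0, by omega⟩, ⟨1, by omega⟩, by simp [Fin.ext_iff], ?_⟩
      ext w
      simp
  · rintro - ⟨y₀, y₁, hne, heq⟩
    have hy : y₀ ∈ (⊥ : SimpleGraph (Fin n)).neighborSet y₁ ∪ {y₁} := by
      rw [← heq]; simp
    simp at hy
    exact hne hy
  · constructor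
    · -- forward: wreath property forces connected or n = 1
      intro H
      by_contra hcon
      push_neg at hcon
      obtain ⟨h1, h2⟩ := hcon
      have hn2 : 2 ≤ n := by omega
      set c0 : Fin n := ⟨0, by omega⟩
      set c1 : Fin n := ⟨1, by omega⟩
      have hne : c0 ≠ c1 := by simp [c0, c1, Fin.ext_iff]
      have hp : ¬X.Preconnected := fun hp => h1 ⟨hp⟩
      simp only [SimpleGraph.Preconnected] at hp
      push_neg at hp
      obtain ⟨u, v, huv⟩ := hp
      set g := compSwap X u c0 c1 with hg
      have key : ∀ x y : α, X.Adj x y →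
          (if X.Reachable u x then Equiv.swap c0 c1 else 1) =
          (if X.Reachable u y then Equiv.swap c0 c1 else 1) := by
        intro x y hxy
        have hiff : X.Reachable u x ↔ X.Reachable u y :=
          ⟨fun h => h.trans hxy.reachable, fun h => h.trans hxy.symm.reachable⟩
        by_cases h : X.Reachable u x
        · rw [if_pos h, if_pos (hiff.mp h)]
        · rw [if_neg h, if_neg (fun hy => h (hiff.mpr hy))]
      have hga : IsGraphAut (lexProd X (⊥ : SimpleGraph (Fin n))) g := by
        intro p q
        rw [lex_bot_adj, lex_bot_adj]
        have hp1 : (g p) = (p.1, (if X.Reachable u p.1 then Equiv.swap c0 c1 else 1) p.2) := by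
          rw [hg, compSwap_apply]
          by_cases h : X.Reachable u p.1 <;> simp [h]
        have hq1 : (g q) = (q.1, (if X.Reachable u q.1 then Equiv.swap c0 c1 else 1) q.2) := by
          rw [hg, compSwap_apply]
          by_cases h : X.Reachable u q.1 <;> simp [h]
        rw [hp1, hq1]
        constructor
        · rintro ⟨e1, e2⟩
          refine ⟨?_, e2⟩
          rw [key _ _ e2] at e1
          exact ((if X.Reachable u q.1 then Equiv.swap c0 c1 else 1) : Equiv.Perm (Fin n)).injective e1
        · rintro ⟨e1, e2⟩
          exact ⟨by rw [key _ _ e2, e1], e2⟩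
      obtain ⟨σ, τ, hσ, heq⟩ := H g hga
      have e1 : (g (u, c0)).2 = c1 := by
        rw [hg, compSwap_apply, if_pos (SimpleGraph.Reachable.refl u)]
        simp
      have e2 : (g (v, c0)).2 = c0 := by
        rw [hg, compSwap_apply, if_neg huv]
      rw [heq] at e1 e2
      have e3 : (wreathMap σ τ (u, c0)).2 = τ c0 := rfl
      have e4 : (wreathMap σ τ (v, c0)).2 = τ c0 := rfl
      rw [e3] at e1
      rw [e4] at e2
      exact hne (e2.symm.trans e1)
    · -- backward: connected or n = 1 gives wreath structure
      intro hc f hf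
      have hf' : IsGraphAut (lexProd X (⊥ : SimpleGraph (Fin n))) f.symm := by
        intro i j
        simpa using (hf (f.symm i) (f.symm j)).symm
      have hsnd : ∀ (x y : α) (a : Fin n), (f (x, a)).2 = (f (y, a)).2 := by
        rcases hc with hX | rfl
        · intro x y a
          exact lex_bot_reach_snd (aut_reach hf (lex_bot_reach hX x y a))
        · intro x y a
          exact Subsingleton.elim _ _
      have hsnd' : ∀ (x y : α) (a : Fin n), (f.symm (x, a)).2 = (f.symm (y, a)).2 := by
        rcases hc with hX | rfl
        · intro x y a
          exact lex_bot_reach_snd (aut_reach hf' (lex_bot_reach hX x y a))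
        · intro x y a
          exact Subsingleton.elim _ _
      obtain ⟨x₀⟩ := ‹Nonempty α›
      have hσinj : ∀ a : Fin n, Function.Injective fun x : α => (f (x, a)).1 := by
        intro a x y h
        dsimp only at h
        have h2 : f (x, a) = f (y, a) := Prod.ext h (hsnd x y a)
        exact (Prod.ext_iff.mp (f.injective h2)).1
      have hτinj : Function.Injective fun a : Fin n => (f (x₀, a)).2 := by
        intro a b hab
        dsimp only at hab
        have ha : a = (f.symm (x₀, (f (x₀, a)).2)).2 := by
          rw [hsnd' x₀ (f (x₀, a)).1]
          simp
        have hb : b = (f.symm (x₀, (f (x₀, b)).2)).2 := by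
          rw [hsnd' x₀ (f (x₀, b)).1]
          simp
        rw [ha, hb, hab]
      refine ⟨fun a => Equiv.ofBijective _ (Finite.injective_iff_bijective.mp (hσinj a)),
        Equiv.ofBijective _ (Finite.injective_iff_bijective.mp hτinj), ?_, ?_⟩
      · intro a i j
        have h1 := hf (i, a) (j, a)
        rw [lex_bot_adj, lex_bot_adj] at h1
        simp only [Equiv.ofBijective_apply]
        simpa [hsnd i j a] using h1
      · apply Equiv.ext
        rintro ⟨x, a⟩
        show f (x, a) = ((f (x, a)).1, (f (x₀, a)).2)
        exact Prod.ext rfl (hsnd x x₀ a)
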